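/- Let α > 0 and let f : ℝⁿ → ℝ, g : ℝⁿ → ℝᵐ, h : ℝⁿ → ℝˡ be differentiable, and fix θ ∈ ℝⁿ with gᵢ(θ) ≤ 0 for all i and hⱼ(θ) = 0 for all j (θ is feasible). If (ξ*, u, v) satisfies the QP-KKT conditions at θ, then ⟪∇f(θ), ξ*⟫ ≤ −‖ξ*‖² ≤ 0; moreover, if ⟪∇f(θ), ξ*⟫ = 0 then ξ* = 0 and (θ, u, v) satisfies the NLP-KKT conditions. (Part iii of the Proposition 'Time derivatives and Invariance'.) -/
import Mathlib


open scoped RealInnerProductSpace BigOperators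

/-- The KKT conditions of the safe-gradient-flow quadratic program at `θ`,
with primal point `ξ` and multipliers `(u, v)`. -/
def QPKKT {n m l : ℕ} (α : ℝ)
    (f : EuclideanSpace ℝ (Fin n) → ℝ)
    (g : Fin m → EuclideanSpace ℝ (Fin n) → ℝ)
    (h : Fin l → EuclideanSpace ℝ (Fin n) → ℝ)
    (θ ξ : EuclideanSpace ℝ (Fin n)) (u : Fin m → ℝ) (v : Fin l → ℝ) : Prop :=
  ξ + gradient f θ + ∑ i, u i • gradient (g i) θ + ∑ j, v j • gradient (h j) θ = 0 ∧
  (∀ i, ⟪gradient (g i) θ, ξ⟫ + α * g i θ ≤ 0) ∧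
  (∀ j, ⟪gradient (h j) θ, ξ⟫ + α * h j θ = 0) ∧
  (∀ i, 0 ≤ u i) ∧
  ∑ i, u i * (⟪gradient (g i) θ, ξ⟫ + α * g i θ) = 0

/-- The KKT conditions of the nonlinear program at `θ` with multipliers `(u, v)`. -/
def NLPKKT {n m l : ℕ}
    (f : EuclideanSpace ℝ (Fin n) → ℝ)
    (g : Fin m → EuclideanSpace ℝ (Fin n) → ℝ)
    (h : Fin l → EuclideanSpace ℝ (Fin n) → ℝ)
    (θ : EuclideanSpace ℝ (Fin n)) (u : Fin m → ℝ) (v : Fin l → ℝ) : Prop :=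
  gradient f θ + ∑ i, u i • gradient (g i) θ + ∑ j, v j • gradient (h j) θ = 0 ∧
  (∀ i, g i θ ≤ 0) ∧
  (∀ j, h j θ = 0) ∧
  (∀ i, 0 ≤ u i) ∧
  ∑ i, u i * g i θ = 0

/-- Part iii of "Time derivatives and Invariance": at a feasible `θ`, a QP-KKT point satisfies
`⟪∇f(θ), ξ*⟫ ≤ -‖ξ*‖² ≤ 0`, and if `⟪∇f(θ), ξ*⟫ = 0` then `ξ* = 0` and `(θ, u, v)` is an
NLP-KKT point. -/
theorem lie_derivative_nonpos_on_feasible {n m l : ℕ} (α : ℝ) (hα : 0 < α)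
    (f : EuclideanSpace ℝ (Fin n) → ℝ)
    (g : Fin m → EuclideanSpace ℝ (Fin n) → ℝ)
    (h : Fin l → EuclideanSpace ℝ (Fin n) → ℝ)
    (hf : Differentiable ℝ f) (hg : ∀ i, Differentiable ℝ (g i))
    (hh : ∀ j, Differentiable ℝ (h j))
    (θ ξstar : EuclideanSpace ℝ (Fin n)) (u : Fin m → ℝ) (v : Fin l → ℝ)
    (hfeas_g : ∀ i, g i θ ≤ 0) (hfeas_h : ∀ j, h j θ = 0)
    (hkkt : QPKKT α f g h θ ξstar u v) :
    (⟪gradient f θ, ξstar⟫ ≤ -‖ξstar‖ ^ 2 ∧ -‖ξstar‖ ^ 2 ≤ 0) ∧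
    (⟪gradient f θ, ξstar⟫ = 0 → ξstar = 0 ∧ NLPKKT f g h θ u v) := by
  obtain ⟨ha, hb, hc, hd, he⟩ := hkkt
  -- h-gradient inner products vanish
  have hsumh : ∀ j, ⟪gradient (h j) θ, ξstar⟫ = 0 := by
    intro j
    have := hc j
    rw [hfeas_h j] at this
    linarith
  -- sum over u of g-inner products
  have hsumg : ∑ i, u i * ⟪gradient (g i) θ, ξstar⟫ = -α * ∑ i, u i * g i θ := by
    have he' : ∑ i, (u i * ⟪gradient (g i) θ, ξstar⟫ + α * (u i * g i θ)) = 0 := by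
      rw [← he]; congr 1; ext i; ring
    rw [Finset.sum_add_distrib, ← Finset.mul_sum] at he'
    linarith
  have hug : ∑ i, u i * g i θ ≤ 0 :=
    Finset.sum_nonpos fun i _ => mul_nonpos_of_nonneg_of_nonpos (hd i) (hfeas_g i)
  have key : ⟪gradient f θ, ξstar⟫ = -‖ξstar‖ ^ 2 + α * ∑ i, u i * g i θ := by
    have h0 := congrArg (fun x => ⟪x, ξstar⟫) ha
    simp only [inner_add_left, sum_inner, real_inner_smul_left, inner_zero_left,
      real_inner_self_eq_norm_sq] at h0
    rw [hsumg] at h0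
    have h1 : ∑ j, v j * ⟪gradient (h j) θ, ξstar⟫ = 0 := by
      apply Finset.sum_eq_zero; intro j _; rw [hsumh j]; ring
    rw [h1] at h0
    nlinarith [h0]
  have hmain : ⟪gradient f θ, ξstar⟫ ≤ -‖ξstar‖ ^ 2 := by nlinarith
  refine ⟨⟨hmain, neg_nonpos.mpr (sq_nonneg _)⟩, ?_⟩
  intro hz
  have hnz : ‖ξstar‖ ^ 2 = 0 ∧ ∑ i, u i * g i θ = 0 := by
    constructor <;> nlinarith [sq_nonneg ‖ξstar‖]
  have hx0 : ξstar = 0 := by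
    have := hnz.1
    simpa [pow_eq_zero_iff] using this
  refine ⟨hx0, ?_, hfeas_g, hfeas_h, hd, hnz.2⟩
  rw [hx0, zero_add] at ha
  exact ha
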